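/- Let k be a field, K a purely transcendental field extension of k, and R a commutative k-algebra. For every prime ideal P of R, the extension P(K ⊗_k R) is a prime ideal of K ⊗_k R. -/

import Mathlib

open scoped TensorProduct

set_option maxHeartbeats 1000000 in
theorem fracPoly_tensor_isDomain (k : Type*) [Field k] (I : Type*) (D : Type*) [CommRing D]
    [IsDomain D] [Algebra k D] :
    IsDomain ((FractionRing (MvPolynomial I k)) ⊗[k] D) := by
  classical
  set A := MvPolynomial I k with hA
  set FA := FractionRing A with hFA
  let eC : (A ⊗[k] D) ≃+* MvPolynomial I D :=
    ((Algebra.TensorProduct.comm k A D).toRingEquiv).trans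
      (MvPolynomial.algebraTensorAlgEquiv k D).toRingEquiv
  haveI : IsDomain (A ⊗[k] D) := Function.Injective.isDomain eC.toRingHom eC.injective
  let h : (A ⊗[k] D) →ₗ[A] (FA ⊗[k] D) :=
    TensorProduct.AlgebraTensorModule.map (Algebra.linearMap A FA) LinearMap.id
  have hbc : IsBaseChange FA h := by
    refine IsBaseChange.of_comp (TensorProduct.isBaseChange k D A) (f := TensorProduct.mk k A D 1) ?_
    have hcomp : (h.restrictScalars k) ∘ₗ TensorProduct.mk k A D 1
        = TensorProduct.mk k FA D 1 := by
      ext d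
      simp [h]
    rw [show ((h : (A ⊗[k] D) →ₗ[k] (FA ⊗[k] D)) ∘ₗ TensorProduct.mk k A D 1)
        = TensorProduct.mk k FA D 1 from hcomp]
    exact TensorProduct.isBaseChange k D FA
  letI algCL : Algebra (A ⊗[k] D) (FA ⊗[k] D) :=
    (Algebra.TensorProduct.map (IsScalarTower.toAlgHom k A FA) (AlgHom.id k D)).toRingHom.toAlgebra
  haveI tower : @IsScalarTower A (A ⊗[k] D) (FA ⊗[k] D)
      Algebra.toSMul Algebra.toSMul Algebra.toSMul :=
    IsScalarTower.of_algebraMap_eq fun a => by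
      show (algebraMap A FA a) ⊗ₜ[k] (1 : D)
        = Algebra.TensorProduct.map (IsScalarTower.toAlgHom k A FA) (AlgHom.id k D)
          (a ⊗ₜ[k] (1 : D))
      simp
  haveI hloc : IsLocalization
      (Algebra.algebraMapSubmonoid (A ⊗[k] D) (nonZeroDivisors A)) (FA ⊗[k] D) := by
    rw [← isLocalizedModule_iff_isLocalization,
      isLocalizedModule_iff_isBaseChange (S := nonZeroDivisors A) (A := FA)]
    exact hbc
  have hinj : Function.Injective (algebraMap A (A ⊗[k] D)) := by
    intro a b hab
    have key : ∀ c : A, eC (algebraMap A (A ⊗[k] D) c) = MvPolynomial.map (algebraMap k D) c := by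
      intro c
      show eC (c ⊗ₜ 1) = _
      simp only [eC, RingEquiv.coe_trans, Function.comp_apply, AlgEquiv.toRingEquiv_eq_coe,
        AlgEquiv.coe_ringEquiv, Algebra.TensorProduct.comm_tmul]
      rw [MvPolynomial.algebraTensorAlgEquiv_tmul, one_smul]
    have h2 : eC (algebraMap A (A ⊗[k] D) a) = eC (algebraMap A (A ⊗[k] D) b) := by rw [hab]
    rw [key, key] at h2
    exact MvPolynomial.map_injective _ (algebraMap k D).injective h2
  have hM : Algebra.algebraMapSubmonoid (A ⊗[k] D) (nonZeroDivisors A)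
      ≤ nonZeroDivisors (A ⊗[k] D) := by
    rintro _ ⟨s, hs, rfl⟩
    apply mem_nonZeroDivisors_of_ne_zero
    have hs0 : s ≠ 0 := nonZeroDivisors.ne_zero hs
    intro h0
    exact hs0 (hinj (by rw [h0, map_zero]))
  exact IsLocalization.isDomain_of_le_nonZeroDivisors (S := FA ⊗[k] D) hM

/-- If `K` is a purely transcendental field extension of `k` and `R` is a
commutative `k`-algebra, then for every prime ideal `P` of `R` the extension
`P(K ⊗_k R)` is a prime ideal of `K ⊗_k R`. -/
theorem tensor_purely_transcendental_map_prime
    (k K : Type*) [Field k] [Field K] [Algebra k K]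
    {I : Type*} (α : I → K)
    (halg : AlgebraicIndependent k α)
    (hgen : IntermediateField.adjoin k (Set.range α) = ⊤)
    (R : Type*) [CommRing R] [Algebra k R]
    (P : Ideal R) (hP : P.IsPrime) :
    (P.map (Algebra.TensorProduct.includeRight : R →ₐ[k] K ⊗[k] R).toRingHom).IsPrime := by
  haveI := hP
  let D := R ⧸ P
  haveI : IsDomain D := Ideal.Quotient.isDomain P
  let e : FractionRing (MvPolynomial I k) ≃ₐ[k] K :=
    halg.aevalEquivField.trans ((IntermediateField.equivOfEq hgen).trans IntermediateField.topEquiv)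
  haveI : IsDomain (K ⊗[k] D) := by
    haveI := fracPoly_tensor_isDomain k I D
    exact Function.Injective.isDomain
      ((Algebra.TensorProduct.congr e (AlgEquiv.refl (R := k) (A₁ := D))).symm.toRingEquiv.toRingHom)
      (Algebra.TensorProduct.congr e (AlgEquiv.refl (R := k) (A₁ := D))).symm.injective
  let g : R →ₐ[k] D := Ideal.Quotient.mkₐ k P
  have hker : RingHom.ker (Algebra.TensorProduct.map (AlgHom.id k K) g)
      = P.map (Algebra.TensorProduct.includeRight : R →ₐ[k] K ⊗[k] R).toRingHom := by
    rw [Algebra.TensorProduct.lTensor_ker g (Ideal.Quotient.mkₐ_surjective k P)]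
    have : RingHom.ker g = P := Ideal.Quotient.mkₐ_ker k P
    rw [this]
    rfl
  rw [← hker]
  exact RingHom.ker_isPrime _
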